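/- Let X be a set, H a Hilbert space with orthonormal basis (e_t)_{t∈X} indexed by X, and for each x ∈ X let L_x = (e_x)^⊥, the closed span of {e_t : t ≠ x}. If m : X → H is a continuous map from a compact topological space X to H, then the set {x ∈ X : m(x) ∉ L_x} = {x ∈ X : ⟨e_x, m(x)⟩ ≠ 0} is countable. -/

import Mathlib

/-- For a fixed vector `v`, the set of indices with nonzero inner product against an
orthonormal family is countable (consequence of Bessel's inequality). -/
lemma countable_inner_ne_zero_fixed {X : Type*} {H : Type*} [NormedAddCommGroup H]
    [InnerProductSpace ℂ H] (e : X → H) (he : Orthonormal ℂ e) (v : H) :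
    Set.Countable {x : X | (inner ℂ (e x) v : ℂ) ≠ 0} := by
  have hs : Summable fun i => ‖(inner ℂ (e i) v : ℂ)‖ ^ 2 := he.inner_products_summable v
  have hs' : Summable fun i => (‖(inner ℂ (e i) v : ℂ)‖₊ ^ 2 : NNReal) := by
    rw [← NNReal.summable_coe]
    simpa using hs
  have := hs'.countable_support_nnreal
  refine this.mono ?_
  intro x hx
  simp only [Function.support, Set.mem_setOf_eq] at hx ⊢
  simpa using hx

/-- Let `X` be a set, `H` a Hilbert space with an orthonormal family
`(e t)_{t ∈ X}` indexed by `X`, and for each `x` let `L x = (e x)ᗮ`. If `m : X → H` is a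
continuous map from a compact topological space `X` to `H`, then the set
`{x : m x ∉ L x} = {x : ⟪e x, m x⟫ ≠ 0}` is countable. -/
theorem countable_not_mem_orthogonal {X : Type*} [TopologicalSpace X] [CompactSpace X]
    {H : Type*} [NormedAddCommGroup H] [InnerProductSpace ℂ H] [CompleteSpace H]
    (e : X → H) (he : Orthonormal ℂ e)
    (m : X → H) (hm : Continuous m) :
    Set.Countable {x : X | (inner ℂ (e x) (m x) : ℂ) ≠ 0} := by
  -- the range of `m` is compact, hence separable
  obtain ⟨c, hc_count, hc_sub⟩ := (isCompact_range hm).isSeparable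
  -- the set is contained in the union over `v ∈ c` of `{x | ⟪e x, v⟫ ≠ 0}`
  have hsub : {x : X | (inner ℂ (e x) (m x) : ℂ) ≠ 0} ⊆
      ⋃ v ∈ c, {x : X | (inner ℂ (e x) v : ℂ) ≠ 0} := by
    intro x hx
    simp only [Set.mem_setOf_eq] at hx
    have hε : (0 : ℝ) < ‖(inner ℂ (e x) (m x) : ℂ)‖ := norm_pos_iff.mpr hx
    have hmx : m x ∈ closure c := hc_sub (Set.mem_range_self x)
    obtain ⟨v, hv, hvd⟩ := Metric.mem_closure_iff.mp hmx _ hε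
    refine Set.mem_biUnion hv ?_
    simp only [Set.mem_setOf_eq]
    intro hzero
    have h1 : (inner ℂ (e x) (m x - v) : ℂ) = inner ℂ (e x) (m x) := by
      rw [inner_sub_right, hzero, sub_zero]
    have h2 : ‖(inner ℂ (e x) (m x - v) : ℂ)‖ ≤ ‖e x‖ * ‖m x - v‖ := norm_inner_le_norm _ _
    rw [h1, he.1 x, one_mul] at h2
    rw [dist_eq_norm] at hvd
    linarith
  exact Set.Countable.mono hsub
    (hc_count.biUnion_iff.mpr fun v _ => countable_inner_ne_zero_fixed e he v)
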